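/- Let d, a₁₁, a₂₂ be strictly positive real numbers and let λ ∈ ℂ satisfy Re λ ≥ 0 and λ ≠ 0. Then for every real number z ≤ 0, one has d·z³ − λa₁₁z² + λa₂₂z − λ² ≠ 0 (as a complex number). Equivalently, every real root of the cubic p(z) = d·z³ − λa₁₁z² + λa₂₂z − λ² is strictly positive. -/
import Mathlib


/-- For `d, a₁₁, a₂₂ > 0` and `λ ∈ ℂ` with `Re λ ≥ 0`, `λ ≠ 0`, the cubic
`p(z) = dz³ − λa₁₁z² + λa₂₂z − λ²` has no real root `z ≤ 0`; equivalently every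
real root is strictly positive. -/
theorem stmt_5 (d a11 a22 : ℝ) (hd : 0 < d) (h11 : 0 < a11) (h22 : 0 < a22)
    (lam : ℂ) (hre : 0 ≤ lam.re) (hlam : lam ≠ 0) :
    (∀ z : ℝ, z ≤ 0 →
      (d : ℂ) * (z : ℂ) ^ 3 - lam * (a11 : ℂ) * (z : ℂ) ^ 2
        + lam * (a22 : ℂ) * (z : ℂ) - lam ^ 2 ≠ 0) ∧
    (∀ z : ℝ,
      (d : ℂ) * (z : ℂ) ^ 3 - lam * (a11 : ℂ) * (z : ℂ) ^ 2
        + lam * (a22 : ℂ) * (z : ℂ) - lam ^ 2 = 0 → 0 < z) := by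
  have key : ∀ z : ℝ, z ≤ 0 →
      (d : ℂ) * (z : ℂ) ^ 3 - lam * (a11 : ℂ) * (z : ℂ) ^ 2
        + lam * (a22 : ℂ) * (z : ℂ) - lam ^ 2 ≠ 0 := by
    intro z hz h
    set x := lam.re with hx
    set y := lam.im with hy
    have hR : ((d : ℂ) * (z : ℂ) ^ 3 - lam * (a11 : ℂ) * (z : ℂ) ^ 2
        + lam * (a22 : ℂ) * (z : ℂ) - lam ^ 2).re = 0 := by rw [h]; simp
    have hI : ((d : ℂ) * (z : ℂ) ^ 3 - lam * (a11 : ℂ) * (z : ℂ) ^ 2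
        + lam * (a22 : ℂ) * (z : ℂ) - lam ^ 2).im = 0 := by rw [h]; simp
    simp [Complex.sub_re, Complex.add_re, Complex.mul_re, Complex.mul_im,
      Complex.sub_im, Complex.add_im, pow_succ, pow_zero, Complex.one_re,
      Complex.one_im, Complex.ofReal_re, Complex.ofReal_im, ← hx, ← hy] at hR hI
    -- hI gives y * (-a11 z^2 + a22 z - 2x) = 0, hR the real equation
    have hlam' : x ≠ 0 ∨ y ≠ 0 := by
      by_contra hc
      push_neg at hc
      exact hlam (Complex.ext hc.1 hc.2)
    rcases eq_or_ne y 0 with hy0 | hy0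
    · -- lam real, positive
      have hx0 : 0 < x := lt_of_le_of_ne hre (by
        rcases hlam' with h' | h'
        · exact Ne.symm h'
        · exact absurd hy0 h')
      rw [hy0] at hR
      nlinarith [mul_nonneg (mul_nonneg hx0.le h11.le) (mul_self_nonneg z),
        mul_nonneg (mul_nonneg hd.le (mul_self_nonneg z)) (neg_nonneg.2 hz),
        mul_nonneg (mul_nonneg hx0.le h22.le) (neg_nonneg.2 hz), mul_pos hx0 hx0]
    · have hE : -(a11 * (z * z)) + a22 * z - 2 * x = 0 := by
        rcases mul_eq_zero.mp (show y * (-(a11 * (z * z)) + a22 * z - 2 * x) = 0 by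
          linear_combination hI) with h' | h'
        · exact absurd h' hy0
        · exact h'
      have h1 : a22 * z = 0 := le_antisymm (mul_nonpos_of_nonneg_of_nonpos h22.le hz)
        (by nlinarith [mul_nonneg h11.le (mul_self_nonneg z)])
      have hz0 : z = 0 := by
        rcases mul_eq_zero.mp h1 with h' | h'
        · exact absurd h' h22.ne'
        · exact h'
      have hx0 : x = 0 := by rw [hz0] at hE; linarith
      rw [hz0, hx0] at hR
      have : y = 0 := by nlinarith
      exact hy0 this
  refine ⟨key, fun z h => ?_⟩
  by_contra hz
  push_neg at hz
  exact key z hz h
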